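/- Let f be an injective function mapping pairs (label, multiset of values) to values, and for a rooted labeled tree define ahu(v) = f(μ(v), {{ ahu(u) : u a child of v }}) bottom-up (so leaves get ahu(v) = f(μ(v), ∅)). Then for any two rooted labeled trees T_1 and T_2, ahu(r(T_1)) = ahu(r(T_2)) if and only if T_1 and T_2 are isomorphic as rooted labeled trees. -/

import Mathlib

open scoped Classical

universe u v

/-- A rooted labeled (unordered) tree: a root label together with a list of
child subtrees.  The list order is irrelevant for the isomorphism relation. -/
inductive LTree (L : Type u) : Type u
  | node : L → List (LTree L) → LTree L

namespace LTree

variable {L : Type u} {L' C : Type v}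

/-- The label of the root. -/
def label : LTree L → L
  | node a _ => a

/-- The child subtrees of the root. -/
def children : LTree L → List (LTree L)
  | node _ ts => ts

/-- Isomorphism of rooted labeled trees: there is a bijection between the node
sets preserving the root, the parent–child relation and node labels; for our
representation this means equal root labels and children that correspond, up to
a permutation, to pairwise isomorphic subtrees. -/
inductive Iso : LTree L → LTree L → Prop
  | node (a : L) {ts us vs : List (LTree L)} :
      List.Forall₂ Iso ts vs → vs.Perm us → Iso (node a ts) (node a us)

/-- `Embeds t s` : `t` is an induced rooted subtree of `s`, i.e. the nodes of
`t` inject into the nodes of `s` preserving the root, labels and the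
parent–child relation. -/
inductive Embeds : LTree L → LTree L → Prop
  | node (a : L) {ts us vs : List (LTree L)} :
      List.Forall₂ Embeds ts vs → vs.Subperm us → Embeds (node a ts) (node a us)

/-- Number of nodes of a rooted tree. -/
def size : LTree L → ℕ
  | node _ ts => 1 + (ts.attach.map (fun c => size c.1)).sum
decreasing_by simp_wf; have := List.sizeOf_lt_of_mem c.2; omega

/-- Relabel a tree by `f`. -/
def map (f : L → L') : LTree L → LTree L'
  | node a ts => node (f a) (ts.attach.map (fun c => map f c.1))
decreasing_by simp_wf; have := List.sizeOf_lt_of_mem c.2; omega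

/-- Number of nodes of the tree carrying label `x`. -/
def countLabel [DecidableEq L] (x : L) : LTree L → ℕ
  | node a ts => (if a = x then 1 else 0) + (ts.attach.map (fun c => countLabel x c.1)).sum
decreasing_by simp_wf; have := List.sizeOf_lt_of_mem c.2; omega

/-- Number of nodes at depth `d` carrying label `x`. -/
def countAt [DecidableEq L] (x : L) : ℕ → LTree L → ℕ
  | 0, node a _ => if a = x then 1 else 0
  | d+1, node _ ts => (ts.attach.map (fun c => countAt x d c.1)).sum
termination_by _ t => sizeOf t
decreasing_by simp_wf; have := List.sizeOf_lt_of_mem c.2; omega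

/-- `SubtreeAt t d s` : `s` is the subtree of `t` rooted at one of the nodes of
`t` at depth `d`. -/
inductive SubtreeAt : LTree L → ℕ → LTree L → Prop
  | refl (t : LTree L) : SubtreeAt t 0 t
  | step {t c s : LTree L} {d : ℕ} : c ∈ t.children → SubtreeAt c d s → SubtreeAt t (d+1) s

/-- The AHU canonical value: `ahu f t = f (label t) {{ ahu f c | c child of t }}`,
computed bottom-up (a leaf gets `f (label) ∅`). -/
noncomputable def ahu (f : L → Multiset C → C) : LTree L → C
  | node a ts => f a (↑(ts.attach.map (fun c => ahu f c.1)) : Multiset C)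
decreasing_by simp_wf; have := List.sizeOf_lt_of_mem c.2; omega

end LTree

namespace LTree

variable {L : Type u} {C : Type v}

lemma ahu_node (f : L → Multiset C → C) (a : L) (ts : List (LTree L)) :
    ahu f (node a ts) = f a (↑(ts.map (ahu f)) : Multiset C) := by
  rw [ahu]
  congr 1
  simp

lemma forall₂_map_eq (f : L → Multiset C → C) :
    ∀ {ts vs : List (LTree L)},
      (∀ x ∈ ts, ∀ y, Iso x y → ahu f x = ahu f y) →
      List.Forall₂ Iso ts vs → ts.map (ahu f) = vs.map (ahu f) := by
  intro ts vs h hf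
  induction hf with
  | nil => rfl
  | cons hxy _ ih =>
    simp only [List.map_cons]
    rw [h _ List.mem_cons_self _ hxy, ih (fun x hx y hy => h x (List.mem_cons_of_mem _ hx) y hy)]

lemma iso_to_eq (f : L → Multiset C → C) :
    ∀ (n : ℕ) (t s : LTree L), sizeOf t ≤ n → Iso t s → ahu f t = ahu f s := by
  intro n
  induction n with
  | zero =>
    intro t s ht
    cases t with
    | node a ts => simp at ht
  | succ n ih =>
    intro t s ht hiso
    cases hiso with
    | @node a ts us vs hf hperm =>
      rw [ahu_node, ahu_node]
      have hsz : ∀ x ∈ ts, sizeOf x ≤ n := by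
        intro x hx
        have := List.sizeOf_lt_of_mem hx
        simp at ht
        omega
      have h1 : ts.map (ahu f) = vs.map (ahu f) :=
        forall₂_map_eq f (fun x hx y hy => ih x y (hsz x hx) hy) hf
      have h2 : (vs.map (ahu f)).Perm (us.map (ahu f)) := hperm.map _
      congr 1
      rw [h1]
      exact Quot.sound h2

lemma lift_perm (f : L → Multiset C → C) :
    ∀ (ts us : List (LTree L)),
      (∀ x ∈ ts, ∀ y, ahu f x = ahu f y → Iso x y) →
      (ts.map (ahu f)).Perm (us.map (ahu f)) →
      ∃ vs, List.Forall₂ Iso ts vs ∧ vs.Perm us := by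
  intro ts
  induction ts with
  | nil =>
    intro us _ hperm
    have : us.map (ahu f) = [] := (hperm.symm).eq_nil
    have hus : us = [] := List.map_eq_nil_iff.mp this
    exact ⟨[], List.Forall₂.nil, by simp [hus]⟩
  | cons t ts' ih =>
    intro us h hperm
    have hmem : ahu f t ∈ us.map (ahu f) := hperm.mem_iff.mp (by simp)
    obtain ⟨u, hu, hueq⟩ := List.mem_map.mp hmem
    have hiso : Iso t u := h t List.mem_cons_self u hueq.symm
    have hperm2 : us.Perm (u :: us.erase u) := List.perm_cons_erase hu
    have hperm3 : (ts'.map (ahu f)).Perm ((us.erase u).map (ahu f)) := by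
      have : ((t :: ts').map (ahu f)).Perm ((u :: us.erase u).map (ahu f)) :=
        hperm.trans (hperm2.map _)
      simp only [List.map_cons] at this
      rw [← hueq] at this
      exact this.cons_inv
    obtain ⟨vs', hf', hp'⟩ := ih (us.erase u)
      (fun x hx y hy => h x (List.mem_cons_of_mem _ hx) y hy) hperm3
    exact ⟨u :: vs', List.Forall₂.cons hiso hf', ((hp'.cons u).trans hperm2.symm)⟩

lemma eq_to_iso (f : L → Multiset C → C)
    (hinj : ∀ a s b t, f a s = f b t → a = b ∧ s = t) :
    ∀ (n : ℕ) (t s : LTree L), sizeOf t ≤ n → ahu f t = ahu f s → Iso t s := by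
  intro n
  induction n with
  | zero =>
    intro t s ht
    cases t with
    | node a ts => simp at ht
  | succ n ih =>
    intro t s ht heq
    cases t with
    | node a ts =>
      cases s with
      | node b us =>
        rw [ahu_node, ahu_node] at heq
        obtain ⟨hab, hms⟩ := hinj _ _ _ _ heq
        subst hab
        have hperm : (ts.map (ahu f)).Perm (us.map (ahu f)) :=
          Multiset.coe_eq_coe.mp hms
        have hsz : ∀ x ∈ ts, sizeOf x ≤ n := by
          intro x hx
          have := List.sizeOf_lt_of_mem hx
          simp at ht
          omega
        obtain ⟨vs, hf, hp⟩ := lift_perm f ts us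
          (fun x hx y hy => ih x y (hsz x hx) hy) hperm
        exact Iso.node a hf hp

end LTree

/-- For an injective function `f` mapping pairs (label,
multiset of values) to values, the bottom-up AHU encoding satisfies:
`ahu (r T₁) = ahu (r T₂)` iff `T₁` and `T₂` are isomorphic rooted labeled
trees. -/
theorem ahu_eq_iff_iso {L : Type u} {C : Type v} (f : L → Multiset C → C)
    (hinj : ∀ a s b t, f a s = f b t → a = b ∧ s = t)
    (T₁ T₂ : LTree L) :
    LTree.ahu f T₁ = LTree.ahu f T₂ ↔ LTree.Iso T₁ T₂ :=
  ⟨LTree.eq_to_iso f hinj _ T₁ T₂ le_rfl,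
   LTree.iso_to_eq f _ T₁ T₂ le_rfl⟩
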